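/- (Heat semigroup contracts spectral variance) Let φ ∈ H¹(𝕋²) be mean-zero, nonzero, and let κ > 0 satisfy κ‖φ‖_{H¹}²/‖φ‖² ≤ 1/10. Then Var(X_{e^{κΔ}φ}) ≤ (‖φ‖²/‖e^{κΔ}φ‖²) Var(X_φ) ≤ (1 + C κ‖φ‖_{H¹}²/‖φ‖²) Var(X_φ) for an absolute constant C. -/

import Mathlib

/-- Squared Euclidean norm of a vector in ℝ². -/
noncomputable def sqnormv (v : Fin 2 → ℝ) : ℝ := ∑ i, (v i) ^ 2

/-- Total L² mass ‖φ‖² = Σ|φ̂(k)|² of φ given by its Fourier coefficients c. -/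
noncomputable def totalMass (c : (Fin 2 → ℤ) → ℂ) : ℝ := ∑' k : Fin 2 → ℤ, ‖c k‖ ^ 2

/-- Spectral distribution P_φ({k}) = |φ̂(k)|²/‖φ‖². -/
noncomputable def specP (c : (Fin 2 → ℤ) → ℂ) (k : Fin 2 → ℤ) : ℝ :=
  ‖c k‖ ^ 2 / totalMass c

/-- Spectral centroid E(X_φ) = Σ k P_φ({k}) ∈ ℝ². -/
noncomputable def specMean (c : (Fin 2 → ℤ) → ℂ) : Fin 2 → ℝ :=
  fun i => ∑' k : Fin 2 → ℤ, ((k i : ℝ)) * specP c k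

/-- Spectral variance Var(X_φ) = Σ |k − E(X_φ)|² P_φ({k}). -/
noncomputable def specVar (c : (Fin 2 → ℤ) → ℂ) : ℝ :=
  ∑' k : Fin 2 → ℤ, sqnormv (fun i => ((k i : ℝ)) - specMean c i) * specP c k

/-- Euclidean norm of an integer wavenumber. -/
noncomputable def znorm (k : Fin 2 → ℤ) : ℝ := Real.sqrt (sqnormv fun i => ((k i : ℝ)))

/-- The heat multiplier e^{-4π²κ|k|²}. -/
noncomputable def heatMul (κ : ℝ) (k : Fin 2 → ℤ) : ℝ :=
  Real.exp (-(4 * Real.pi ^ 2 * κ * znorm k ^ 2))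

/-- The H¹ energy 4π² Σ |k|²|φ̂(k)|² (normalized consistently with the heat multiplier). -/
noncomputable def H1sq (c : (Fin 2 → ℤ) → ℂ) : ℝ :=
  ∑' k : Fin 2 → ℤ, 4 * Real.pi ^ 2 * znorm k ^ 2 * ‖c k‖ ^ 2

lemma sqnormv_nonneg (v : Fin 2 → ℝ) : 0 ≤ sqnormv v :=
  Finset.sum_nonneg fun i _ => sq_nonneg _

lemma znorm_sq_eq (k : Fin 2 → ℤ) : znorm k ^ 2 = ((k 0 : ℝ))^2 + ((k 1 : ℝ))^2 := by
  rw [znorm, Real.sq_sqrt (sqnormv_nonneg _), sqnormv, Fin.sum_univ_two]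

lemma sq_le_znorm_sq (k : Fin 2 → ℤ) (i : Fin 2) : ((k i : ℝ))^2 ≤ znorm k ^ 2 := by
  rw [znorm, Real.sq_sqrt (sqnormv_nonneg _), sqnormv]
  exact Finset.single_le_sum (f := fun j => ((k j : ℝ))^2) (fun j _ => sq_nonneg _) (Finset.mem_univ i)

lemma one_le_znorm_sq {k : Fin 2 → ℤ} (hk : k ≠ 0) : 1 ≤ znorm k ^ 2 := by
  obtain ⟨i, hi⟩ := Function.ne_iff.mp hk
  have h1 : (1 : ℝ) ≤ ((k i : ℝ))^2 := by
    have := Int.one_le_abs hi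
    have : (1:ℝ) ≤ |(k i : ℝ)| := by
      rw [← Int.cast_abs]; exact_mod_cast this
    nlinarith [abs_nonneg ((k i : ℝ)), sq_abs ((k i : ℝ))]
  exact h1.trans (sq_le_znorm_sq k i)

lemma znorm_le_znorm_sq (k : Fin 2 → ℤ) : znorm k ≤ znorm k ^ 2 := by
  by_cases hk : k = 0
  · subst hk
    have h0 : znorm 0 = 0 := by
      rw [znorm]
      simp [sqnormv]
    rw [h0]; norm_num
  · have h1 : 1 ≤ znorm k ^ 2 := one_le_znorm_sq hk
    have h0 : 0 ≤ znorm k := Real.sqrt_nonneg _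
    nlinarith

lemma abs_le_znorm (k : Fin 2 → ℤ) (i : Fin 2) : |(k i : ℝ)| ≤ znorm k := by
  have h := sq_le_znorm_sq k i
  have h0 : 0 ≤ znorm k := Real.sqrt_nonneg _
  nlinarith [abs_nonneg ((k i : ℝ)), sq_abs ((k i : ℝ))]

/-- Variance is minimized at the mean. -/
lemma var_min {ι : Type*} (f w : ι → ℝ)
    (hw1 : ∑' i, w i = 1) (hws : Summable w)
    (hfw : Summable fun i => f i * w i)
    (hf2w : Summable fun i => (f i - ∑' j, f j * w j)^2 * w i) (t : ℝ) :
    ∑' i, (f i - ∑' j, f j * w j)^2 * w i ≤ ∑' i, (f i - t)^2 * w i := by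
  set m := ∑' j, f j * w j with hm
  have key : ∑' i, (f i - t)^2 * w i = (∑' i, (f i - m)^2 * w i) + (m - t)^2 := by
    have h1 : (fun i => (f i - t)^2 * w i)
        = fun i => (f i - m)^2 * w i + ((2*(m-t)) * (f i * w i) + ((m-t)*(-t-m)) * w i) := by
      funext i; ring
    rw [h1, Summable.tsum_add hf2w ((hfw.mul_left _).add (hws.mul_left _)),
        Summable.tsum_add (hfw.mul_left _) (hws.mul_left _), tsum_mul_left, tsum_mul_left, hw1, ← hm]
    ring
  rw [key]
  nlinarith [sq_nonneg (m - t)]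

lemma one_sub_exp_le (x : ℝ) : 1 - Real.exp (-(2*x)) ≤ 2*x := by
  have := Real.add_one_le_exp (-(2*x)); linarith

/-- heat semigroup contracts spectral variance: there is an absolute
constant C such that for mean-zero nonzero φ ∈ H¹(𝕋²) and κ > 0 with
κ‖φ‖_{H¹}²/‖φ‖² ≤ 1/10, one has
Var(X_{e^{κΔ}φ}) ≤ (‖φ‖²/‖e^{κΔ}φ‖²) Var(X_φ) ≤ (1 + Cκ‖φ‖_{H¹}²/‖φ‖²) Var(X_φ). -/
theorem heat_contracts_spectral_variance :
    ∃ C : ℝ, 0 < C ∧ ∀ (c : (Fin 2 → ℤ) → ℂ) (κ : ℝ), 0 < κ →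
      c 0 = 0 → 0 < totalMass c →
      (Summable fun k : Fin 2 → ℤ => znorm k ^ 2 * ‖c k‖ ^ 2) →
      κ * H1sq c / totalMass c ≤ 1 / 10 →
      specVar (fun k => (heatMul κ k : ℂ) * c k)
          ≤ (totalMass c / totalMass (fun k => (heatMul κ k : ℂ) * c k)) * specVar c
      ∧ (totalMass c / totalMass (fun k => (heatMul κ k : ℂ) * c k)) * specVar c
          ≤ (1 + C * κ * H1sq c / totalMass c) * specVar c := by
  refine ⟨5/2, by norm_num, ?_⟩
  intro c κ hκ hc0 hM hS2 hsmall
  set cκ : (Fin 2 → ℤ) → ℂ := fun k => (heatMul κ k : ℂ) * c k with hcκ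
  set a : (Fin 2 → ℤ) → ℝ := fun k => ‖c k‖ ^ 2 with ha
  have ha0 : ∀ k, 0 ≤ a k := fun k => sq_nonneg _
  have hh_pos : ∀ k, 0 < heatMul κ k := fun k => Real.exp_pos _
  have hh_le1 : ∀ k, heatMul κ k ≤ 1 := by
    intro k
    apply Real.exp_le_one_iff.mpr
    have : 0 ≤ 4 * Real.pi ^ 2 * κ * znorm k ^ 2 := by positivity
    linarith
  have hb_eq : ∀ k, ‖cκ k‖ ^ 2 = (heatMul κ k)^2 * a k := by
    intro k
    rw [hcκ]
    simp only [norm_mul, Complex.norm_real, Real.norm_eq_abs,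
      abs_of_pos (hh_pos k), mul_pow, ha]
  have hb0 : ∀ k, 0 ≤ ‖cκ k‖ ^ 2 := fun k => sq_nonneg _
  have hak : ∀ k, ‖c k‖ ^ 2 = a k := fun _ => rfl
  have hb_le_a : ∀ k, ‖cκ k‖ ^ 2 ≤ a k := by
    intro k
    rw [hb_eq k]
    have : (heatMul κ k)^2 ≤ 1 := by nlinarith [hh_pos k, hh_le1 k]
    nlinarith [ha0 k]
  -- basic summabilities
  have hS0 : Summable a := by
    apply Summable.of_nonneg_of_le ha0 _ hS2
    intro k
    by_cases hk : k = 0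
    · subst hk
      have h0 : a 0 = 0 := by simp [ha, hc0]
      rw [h0]
      positivity
    · simp only [hak]
      have := one_le_znorm_sq hk
      nlinarith [ha0 k]
  have hSb : Summable (fun k => ‖cκ k‖ ^ 2) :=
    Summable.of_nonneg_of_le hb0 hb_le_a hS0
  -- quadratic summabilities
  have key_summable : ∀ (r : ℝ) (i : Fin 2),
      Summable (fun k : Fin 2 → ℤ => ((k i : ℝ) - r)^2 * a k) := by
    intro r i
    apply Summable.of_nonneg_of_le (fun k => by positivity) _
      ((hS2.mul_left 2).add (hS0.mul_left (2*r^2)))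
    intro k
    have h1 : ((k i : ℝ))^2 ≤ znorm k ^ 2 := sq_le_znorm_sq k i
    have h2 : ((k i : ℝ) - r)^2 ≤ 2 * znorm k ^ 2 + 2 * r^2 := by
      nlinarith [sq_nonneg ((k i : ℝ) + r)]
    have h3 := mul_le_mul_of_nonneg_right h2 (ha0 k)
    simp only [hak]
    nlinarith [h3]
  have key_summable_b : ∀ (r : ℝ) (i : Fin 2),
      Summable (fun k : Fin 2 → ℤ => ((k i : ℝ) - r)^2 * ‖cκ k‖ ^ 2) := by
    intro r i
    apply Summable.of_nonneg_of_le (fun k => by positivity) _ (key_summable r i)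
    intro k
    exact mul_le_mul_of_nonneg_left (hb_le_a k) (sq_nonneg _)
  have lin_summable_b : ∀ i : Fin 2,
      Summable (fun k : Fin 2 → ℤ => (k i : ℝ) * ‖cκ k‖ ^ 2) := by
    intro i
    apply Summable.of_abs
    apply Summable.of_nonneg_of_le (fun k => abs_nonneg _) _ hS2
    intro k
    rw [abs_mul, abs_of_nonneg (hb0 k)]
    have h1 : |(k i : ℝ)| ≤ znorm k ^ 2 := (abs_le_znorm k i).trans (znorm_le_znorm_sq k)
    calc |(k i : ℝ)| * ‖cκ k‖ ^ 2 ≤ |(k i : ℝ)| * a k :=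
          mul_le_mul_of_nonneg_left (hb_le_a k) (abs_nonneg _)
      _ ≤ znorm k ^ 2 * a k := mul_le_mul_of_nonneg_right h1 (ha0 k)
  -- masses
  set M := totalMass c with hMdef
  set Mκ := totalMass cκ with hMκdef
  have hMκ_eq : Mκ = ∑' k, ‖cκ k‖ ^ 2 := rfl
  have hM_eq : M = ∑' k, a k := rfl
  -- energy estimate : M - Mκ ≤ 2 κ H1sq c
  have hH1sum : Summable (fun k : Fin 2 → ℤ => 4 * Real.pi ^ 2 * znorm k ^ 2 * ‖c k‖ ^ 2) := by
    have := hS2.mul_left (4 * Real.pi ^ 2)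
    refine this.congr fun k => ?_
    ring
  have hH1_nonneg : 0 ≤ H1sq c := tsum_nonneg fun k => by positivity
  have henergy : M - Mκ ≤ 2 * κ * H1sq c := by
    rw [hM_eq, hMκ_eq, ← Summable.tsum_sub hS0 hSb]
    have hrw : H1sq c = ∑' k : Fin 2 → ℤ, 4 * Real.pi ^ 2 * znorm k ^ 2 * ‖c k‖ ^ 2 := rfl
    rw [hrw, ← tsum_mul_left]
    apply Summable.tsum_le_tsum _ (hS0.sub hSb) (hH1sum.mul_left (2*κ))
    intro k
    have hx : 0 ≤ 4 * Real.pi ^ 2 * κ * znorm k ^ 2 := by positivity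
    have hexp : 1 - Real.exp (-(2 * (4 * Real.pi ^ 2 * κ * znorm k ^ 2)))
        ≤ 2 * (4 * Real.pi ^ 2 * κ * znorm k ^ 2) := one_sub_exp_le _
    have hsq : (heatMul κ k)^2 = Real.exp (-(2 * (4 * Real.pi ^ 2 * κ * znorm k ^ 2))) := by
      rw [heatMul, sq, ← Real.exp_add]
      congr 1
      ring
    rw [hb_eq k]
    have h4 := mul_le_mul_of_nonneg_right hexp (ha0 k)
    rw [← hsq] at h4
    simp only [hak]
    nlinarith [h4]
  have hκH1 : κ * H1sq c ≤ M / 10 := by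
    rw [div_le_iff₀ hM] at hsmall
    linarith
  have hMκ_lb : M - 2 * κ * H1sq c ≤ Mκ := by linarith
  have hMκ_pos : 0 < Mκ := by
    have : 0 ≤ κ * H1sq c := by positivity
    linarith
  -- ratio bound
  have hratio : M / Mκ ≤ 1 + 5/2 * κ * H1sq c / M := by
    have hP0 : 0 ≤ κ * H1sq c := by positivity
    have h1 : 1 + 5/2 * κ * H1sq c / M = (M + 5/2 * (κ * H1sq c)) / M := by
      field_simp
    rw [h1, div_le_div_iff₀ hMκ_pos hM]
    have h2 : (M + 5/2 * (κ * H1sq c)) * (M - 2*(κ * H1sq c))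
        ≤ (M + 5/2 * (κ * H1sq c)) * Mκ := by
      apply mul_le_mul_of_nonneg_left _ (by linarith)
      linarith
    nlinarith [h2, mul_le_mul_of_nonneg_left hκH1 hP0]
  -- nonnegativity of variance
  have hVar_nonneg : 0 ≤ specVar c := by
    apply tsum_nonneg
    intro k
    have h1 := sqnormv_nonneg (fun i => ((k i : ℝ)) - specMean c i)
    have h2 : 0 ≤ specP c k := div_nonneg (sq_nonneg _) hM.le
    positivity
  constructor
  · -- main variance inequality
    set μ : Fin 2 → ℝ := specMean c with hμ
    set μκ : Fin 2 → ℝ := specMean cκ with hμκ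
    have hPκ_eq : ∀ k, specP cκ k = ‖cκ k‖ ^ 2 / Mκ := fun k => rfl
    have hws : Summable (fun k => specP cκ k) := hSb.div_const Mκ
    have hw1 : ∑' k, specP cκ k = 1 := by
      simp only [hPκ_eq]
      rw [tsum_div_const, ← hMκ_eq, div_self hMκ_pos.ne']
    have hfw : ∀ i : Fin 2, Summable (fun k : Fin 2 → ℤ => (k i : ℝ) * specP cκ k) := by
      intro i
      have := (lin_summable_b i).div_const Mκ
      refine this.congr fun k => ?_
      rw [hPκ_eq]; ring
    have hf2w : ∀ (r : ℝ) (i : Fin 2),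
        Summable (fun k : Fin 2 → ℤ => ((k i : ℝ) - r)^2 * specP cκ k) := by
      intro r i
      have := (key_summable_b r i).div_const Mκ
      refine this.congr fun k => ?_
      rw [hPκ_eq]; ring
    have hμκ_eq : ∀ i : Fin 2, μκ i = ∑' k, (k i : ℝ) * specP cκ k := fun i => rfl
    -- coordinatewise variance minimization
    have hmin : ∀ i : Fin 2,
        ∑' k, ((k i : ℝ) - μκ i)^2 * specP cκ k
          ≤ ∑' k, ((k i : ℝ) - μ i)^2 * specP cκ k := by
      intro i
      have := var_min (fun k : Fin 2 → ℤ => (k i : ℝ)) (fun k => specP cκ k)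
        hw1 hws (hfw i) (by rw [← hμκ_eq i]; exact hf2w (μκ i) i) (μ i)
      rwa [← hμκ_eq i] at this
    -- expand specVar cκ
    have hexpand : ∀ (m : Fin 2 → ℝ) (w : (Fin 2 → ℤ) → ℝ),
        (∀ i : Fin 2, Summable (fun k : Fin 2 → ℤ => ((k i : ℝ) - m i)^2 * w k)) →
        ∑' k : Fin 2 → ℤ, sqnormv (fun i => ((k i : ℝ)) - m i) * w k
          = ∑ i : Fin 2, ∑' k : Fin 2 → ℤ, ((k i : ℝ) - m i)^2 * w k := by
      intro m w hw
      rw [show (fun k : Fin 2 → ℤ => sqnormv (fun i => ((k i : ℝ)) - m i) * w k)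
          = fun k : Fin 2 → ℤ => ∑ i : Fin 2, ((k i : ℝ) - m i)^2 * w k from
        funext fun k => by rw [sqnormv, Finset.sum_mul]]
      exact Summable.tsum_finsetSum (fun i _ => hw i)
    have hVκ : specVar cκ = ∑ i : Fin 2, ∑' k, ((k i : ℝ) - μκ i)^2 * specP cκ k :=
      hexpand μκ (fun k => specP cκ k) (fun i => hf2w (μκ i) i)
    have hW : ∑ i : Fin 2, ∑' k, ((k i : ℝ) - μ i)^2 * specP cκ k
        = ∑' k, sqnormv (fun i => ((k i : ℝ)) - μ i) * specP cκ k :=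
      (hexpand μ (fun k => specP cκ k) (fun i => hf2w (μ i) i)).symm
    have hSaμ : ∀ i : Fin 2, Summable (fun k : Fin 2 → ℤ => ((k i : ℝ) - μ i)^2 * (a k / Mκ)) := by
      intro i
      have := (key_summable (μ i) i).div_const Mκ
      refine this.congr fun k => ?_
      ring
    have hstep4 : ∑' k, sqnormv (fun i => ((k i : ℝ)) - μ i) * specP cκ k
        ≤ ∑' k, sqnormv (fun i => ((k i : ℝ)) - μ i) * (a k / Mκ) := by
      apply Summable.tsum_le_tsum _ _ _
      · intro k
        apply mul_le_mul_of_nonneg_left _ (sqnormv_nonneg _)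
        rw [hPκ_eq]
        exact div_le_div_of_nonneg_right (hb_le_a k) hMκ_pos.le
      · rw [show (fun k : Fin 2 → ℤ => sqnormv (fun i => ((k i : ℝ)) - μ i) * specP cκ k)
            = fun k : Fin 2 → ℤ => ∑ i : Fin 2, ((k i : ℝ) - μ i)^2 * specP cκ k from
          funext fun k => by rw [sqnormv, Finset.sum_mul]]
        exact summable_sum (fun i _ => hf2w (μ i) i)
      · rw [show (fun k : Fin 2 → ℤ => sqnormv (fun i => ((k i : ℝ)) - μ i) * (a k / Mκ))
            = fun k : Fin 2 → ℤ => ∑ i : Fin 2, ((k i : ℝ) - μ i)^2 * (a k / Mκ) from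
          funext fun k => by rw [sqnormv, Finset.sum_mul]]
        exact summable_sum (fun i _ => hSaμ i)
    have hfinal : ∑' k, sqnormv (fun i => ((k i : ℝ)) - μ i) * (a k / Mκ)
        = (M / Mκ) * specVar c := by
      have hrw : specVar c = ∑' k : Fin 2 → ℤ,
          sqnormv (fun i => ((k i : ℝ)) - μ i) * (a k / M) := rfl
      rw [hrw, ← tsum_mul_left]
      congr 1
      funext k
      field_simp [hM.ne', hMκ_pos.ne']
    calc specVar cκ = ∑ i : Fin 2, ∑' k, ((k i : ℝ) - μκ i)^2 * specP cκ k := hVκ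
      _ ≤ ∑ i : Fin 2, ∑' k, ((k i : ℝ) - μ i)^2 * specP cκ k :=
          Finset.sum_le_sum (fun i _ => hmin i)
      _ = ∑' k, sqnormv (fun i => ((k i : ℝ)) - μ i) * specP cκ k := hW
      _ ≤ ∑' k, sqnormv (fun i => ((k i : ℝ)) - μ i) * (a k / Mκ) := hstep4
      _ = (M / Mκ) * specVar c := hfinal
  · -- ratio bound × variance
    have : M / Mκ ≤ 1 + 5/2 * κ * H1sq c / M := hratio
    calc (M / Mκ) * specVar c ≤ (1 + 5/2 * κ * H1sq c / M) * specVar c :=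
          mul_le_mul_of_nonneg_right this hVar_nonneg
      _ = (1 + 5/2 * κ * H1sq c / M) * specVar c := rfl
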